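/- For strings u over alphabet A and v over alphabet B with A ∩ B = ∅, a string w belongs to u & v if and only if the projection of w onto A equals u, the projection of w onto B equals v, and every symbol of w lies in A ∪ B. -/
import Mathlib

/-- The shuffle (interleaving) of two strings, as a set of strings. -/
def shuffle {α : Type*} : List α → List α → Set (List α)
  | [], v => {v}
  | u, [] => {u}
  | a :: u', b :: v' =>
      (fun w => a :: w) '' shuffle u' (b :: v') ∪ (fun w => b :: w) '' shuffle (a :: u') v'
  termination_by u v => u.length + v.length

lemma shuffle_nil_right {α : Type*} (u : List α) : shuffle u [] = {u} := by
  cases u with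
  | nil => rw [shuffle]
  | cons a u => rw [shuffle]; simp

theorem stmt_16 {α : Type*} [DecidableEq α] (A B : Finset α) (hAB : Disjoint A B)
    (u v : List α) (hu : ∀ x ∈ u, x ∈ A) (hv : ∀ x ∈ v, x ∈ B) (w : List α) :
    w ∈ shuffle u v ↔
      w.filter (· ∈ A) = u ∧ w.filter (· ∈ B) = v ∧ ∀ x ∈ w, x ∈ A ∪ B := by
  have notB : ∀ x ∈ A, x ∉ B := fun x hx hx' => (Finset.disjoint_left.mp hAB) hx hx'
  have notA : ∀ x ∈ B, x ∉ A := fun x hx hx' => (Finset.disjoint_left.mp hAB) hx' hx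
  induction u, v using shuffle.induct generalizing w with
  | case1 v =>
    rw [shuffle]
    constructor
    · rintro rfl
      refine ⟨?_, ?_, fun x hx => Finset.mem_union.mpr (Or.inr (hv x hx))⟩
      · rw [List.filter_eq_nil_iff]
        intro x hx
        simpa using notA x (hv x hx)
      · rw [List.filter_eq_self]
        intro x hx
        simpa using hv x hx
    · rintro ⟨h1, h2, h3⟩
      have hwB : ∀ x ∈ w, x ∈ B := by
        intro x hx
        rcases Finset.mem_union.mp (h3 x hx) with h | h
        · have : x ∈ w.filter (· ∈ A) := List.mem_filter.mpr ⟨hx, decide_eq_true h⟩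
          rw [h1] at this; simp at this
        · exact h
      have : w.filter (· ∈ B) = w := by
        rw [List.filter_eq_self]; intro x hx; simpa using hwB x hx
      simp only [Set.mem_singleton_iff]
      rw [← h2, this]
  | case2 u hne =>
    rw [shuffle_nil_right]
    constructor
    · rintro rfl
      refine ⟨?_, ?_, fun x hx => Finset.mem_union.mpr (Or.inl (hu x hx))⟩
      · rw [List.filter_eq_self]
        intro x hx; simpa using hu x hx
      · rw [List.filter_eq_nil_iff]
        intro x hx; simpa using notB x (hu x hx)
    · rintro ⟨h1, h2, h3⟩
      have hwA : ∀ x ∈ w, x ∈ A := by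
        intro x hx
        rcases Finset.mem_union.mp (h3 x hx) with h | h
        · exact h
        · have : x ∈ w.filter (· ∈ B) := List.mem_filter.mpr ⟨hx, decide_eq_true h⟩
          rw [h2] at this; simp at this
      have hw : w.filter (· ∈ A) = w := by
        rw [List.filter_eq_self]; intro x hx; simpa using hwA x hx
      simp only [Set.mem_singleton_iff]
      rw [← h1, hw]
  | case3 a u' b v' ih1 ih2 =>
    have haA : a ∈ A := hu a (by simp)
    have hbB : b ∈ B := hv b (by simp)
    have hu' : ∀ x ∈ u', x ∈ A := fun x hx => hu x (by simp [hx])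
    have hv' : ∀ x ∈ v', x ∈ B := fun x hx => hv x (by simp [hx])
    rw [shuffle]
    constructor
    · rintro (⟨w₁, hw₁, rfl⟩ | ⟨w₂, hw₂, rfl⟩)
      · obtain ⟨h1, h2, h3⟩ := (ih1 hu' hv w₁).mp hw₁
        refine ⟨?_, ?_, ?_⟩
        · rw [List.filter_cons_of_pos (by simpa using haA), h1]
        · rw [List.filter_cons_of_neg (by simpa using notB a haA), h2]
        · intro x hx
          rw [List.mem_cons] at hx
          rcases hx with rfl | hx
          · exact Finset.mem_union.mpr (Or.inl haA)
          · exact h3 x hx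
      · obtain ⟨h1, h2, h3⟩ := (ih2 hu hv' w₂).mp hw₂
        refine ⟨?_, ?_, ?_⟩
        · rw [List.filter_cons_of_neg (by simpa using notA b hbB), h1]
        · rw [List.filter_cons_of_pos (by simpa using hbB), h2]
        · intro x hx
          rw [List.mem_cons] at hx
          rcases hx with rfl | hx
          · exact Finset.mem_union.mpr (Or.inr hbB)
          · exact h3 x hx
    · rintro ⟨h1, h2, h3⟩
      rcases w with _ | ⟨c, w'⟩
      · simp at h1
      rcases Finset.mem_union.mp (h3 c (by simp)) with hc | hc
      · have hcB : c ∉ B := notB c hc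
        rw [List.filter_cons_of_pos (by simpa using hc)] at h1
        rw [List.filter_cons_of_neg (by simpa using hcB)] at h2
        injection h1 with hca h1'
        subst hca
        left
        exact ⟨w', (ih1 hu' hv w').mpr ⟨h1', h2, fun x hx => h3 x (by simp [hx])⟩, rfl⟩
      · have hcA : c ∉ A := notA c hc
        rw [List.filter_cons_of_neg (by simpa using hcA)] at h1
        rw [List.filter_cons_of_pos (by simpa using hc)] at h2
        injection h2 with hcb h2'
        subst hcb
        right
        exact ⟨w', (ih2 hu hv' w').mpr ⟨h1, h2', fun x hx => h3 x (by simp [hx])⟩, rfl⟩
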